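/- (Proposition 3) The constant N₁ satisfies N₁ ≥ 1, and the target density is bounded by the scaled proposal density: h(x) ≤ N₁ · g(x) for all x ∈ ℝ^n; moreover the bound is attained at x = 0 exactly when w(0) = 1, i.e. h(0) = N₁ g(0). -/

import Mathlib

open Matrix MeasureTheory ProbabilityTheory Finset

noncomputable section

private lemma aux_dotT {p q : ℕ} (C : Matrix (Fin p) (Fin q) ℝ) (x : Fin q → ℝ) (u : Fin p → ℝ) :
    x ⬝ᵥ (Cᵀ *ᵥ u) = (C *ᵥ x) ⬝ᵥ u := by
  rw [Matrix.dotProduct_mulVec, Matrix.vecMul_transpose]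

private lemma aux_sum_vecMulVec {n : ℕ} (v : Fin n → Fin n → ℝ) (c : Fin n → ℝ) :
    ∑ j, c j • Matrix.vecMulVec (v j) (v j) = (Matrix.of v)ᵀ * Matrix.diagonal c * Matrix.of v := by
  ext p q
  simp only [Matrix.sum_apply, Matrix.smul_apply, Matrix.vecMulVec_apply, smul_eq_mul,
    Matrix.mul_apply, Matrix.transpose_apply, Matrix.of_apply, Matrix.diagonal_apply]
  refine Finset.sum_congr rfl fun j _ => ?_
  rw [Finset.sum_eq_single j (fun l _ hl => by simp [hl]) (by simp)]
  rw [if_pos rfl]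
  ring

private lemma aux_sqrt_prod {ι : Type*} (s : Finset ι) (f : ι → ℝ) (hf : ∀ j ∈ s, 0 ≤ f j) :
    Real.sqrt (∏ j ∈ s, f j) = ∏ j ∈ s, Real.sqrt (f j) := by
  induction s using Finset.cons_induction with
  | empty => simp
  | cons a s ha ih =>
    rw [Finset.prod_cons, Finset.prod_cons,
      Real.sqrt_mul (hf a (Finset.mem_cons_self a s)),
      ih (fun j hj => hf j (Finset.mem_cons_of_mem hj))]

set_option maxHeartbeats 1000000 in
theorem stmt17
    (m n : ℕ) (hm : 0 < m) (hn : 0 < n)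
    (A : Matrix (Fin m) (Fin n) ℝ) (L : Matrix (Fin n) (Fin n) ℝ) (hL : IsUnit L.det)
    (μ σ : ℝ) (hμ : 0 < μ) (hσ : 0 < σ)
    (b : Fin m → ℝ)
    (v : Fin n → Fin n → ℝ) (lam : Fin n → ℝ)
    (horth : ∀ i j, v i ⬝ᵥ v j = if i = j then (1 : ℝ) else 0)
    (hlam_nonneg : ∀ j, 0 ≤ lam j) (hlam_anti : Antitone lam)
    (hHdecomp : (L⁻¹)ᵀ * Aᵀ * A * L⁻¹ = ∑ j, lam j • vecMulVec (v j) (v j))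
    (k : ℕ) (hk : k ≤ n)
    (Γcond : Matrix (Fin n) (Fin n) ℝ)
    (hΓcond : Γcond = (μ • (Aᵀ * A) + σ • (Lᵀ * L))⁻¹)
    (Γhat : Matrix (Fin n) (Fin n) ℝ)
    (hΓhat : Γhat = L⁻¹ * (σ • (1 : Matrix (Fin n) (Fin n) ℝ) +
        μ • ∑ j ∈ Finset.univ.filter (fun j : Fin n => (j : ℕ) < k),
          lam j • vecMulVec (v j) (v j))⁻¹ * (L⁻¹)ᵀ)
    (xcond : Fin n → ℝ) (hxcond : xcond = μ • (Γcond *ᵥ (Aᵀ *ᵥ b)))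
    (xhat : Fin n → ℝ) (hxhat : xhat = μ • (Γhat *ᵥ (Aᵀ *ᵥ b)))
    (w : (Fin n → ℝ) → ℝ)
    (hw : ∀ x, w x = Real.exp (-(1/2) * (x ⬝ᵥ ((Γcond⁻¹ - Γhat⁻¹) *ᵥ x))))
    (hfun : (Fin n → ℝ) → ℝ)
    (hhfun : ∀ x, hfun x = (2 * Real.pi) ^ (-(n : ℝ) / 2) * Γcond.det ^ (-(1 : ℝ) / 2) *
        Real.exp (-(1/2) * ((x - xcond) ⬝ᵥ (Γcond⁻¹ *ᵥ (x - xcond)))))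
    (gfun : (Fin n → ℝ) → ℝ)
    (hgfun : ∀ x, gfun x = (2 * Real.pi) ^ (-(n : ℝ) / 2) * Γhat.det ^ (-(1 : ℝ) / 2) *
        Real.exp (-(1/2) * ((x - xhat) ⬝ᵥ (Γhat⁻¹ *ᵥ (x - xhat)))))
    (N₁ : ℝ)
    (hN₁ : N₁ = Real.exp ((μ ^ 2 / (2 * σ)) *
        ∑ j ∈ Finset.univ.filter (fun j : Fin n => k ≤ (j : ℕ)),
          ((μ * lam j) / (μ * lam j + σ)) * (b ⬝ᵥ (A *ᵥ (L⁻¹ *ᵥ v j))) ^ 2) *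
      ∏ j ∈ Finset.univ.filter (fun j : Fin n => k ≤ (j : ℕ)),
        Real.sqrt (1 + μ * lam j / σ))
    :
    1 ≤ N₁ ∧ (∀ x : Fin n → ℝ, hfun x ≤ N₁ * gfun x) ∧
    w 0 = 1 ∧ hfun 0 = N₁ * gfun 0 := by
  classical
  -- the orthogonal matrix V with rows v j
  set V : Matrix (Fin n) (Fin n) ℝ := Matrix.of v with hVdef
  have hVVt : V * Vᵀ = 1 := by
    ext i j
    simpa [hVdef, Matrix.mul_apply, Matrix.one_apply, dotProduct] using horth i j
  have hVtV : Vᵀ * V = 1 := mul_eq_one_comm.mp hVVt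
  set M : (Fin n → ℝ) → Matrix (Fin n) (Fin n) ℝ := fun c => Vᵀ * Matrix.diagonal c * V with hMdef0
  have hMdef : ∀ c : Fin n → ℝ,
      ∑ j, c j • Matrix.vecMulVec (v j) (v j) = M c := fun c => aux_sum_vecMulVec v c
  have hMmul : ∀ c d : Fin n → ℝ, M c * M d = M (fun j => c j * d j) := by
    intro c d
    show Vᵀ * Matrix.diagonal c * V * (Vᵀ * Matrix.diagonal d * V)
      = Vᵀ * Matrix.diagonal (fun j => c j * d j) * V
    rw [← Matrix.diagonal_mul_diagonal]
    simp only [Matrix.mul_assoc]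
    rw [← Matrix.mul_assoc V Vᵀ, hVVt, Matrix.one_mul]
  have hMone : M (fun _ => (1:ℝ)) = 1 := by
    show Vᵀ * Matrix.diagonal (fun _ => (1:ℝ)) * V = 1
    rw [Matrix.diagonal_one, Matrix.mul_one, hVtV]
  have hMinv : ∀ c : Fin n → ℝ, (∀ j, c j ≠ 0) → (M c)⁻¹ = M (fun j => (c j)⁻¹) := by
    intro c hc
    apply Matrix.inv_eq_right_inv
    rw [hMmul]
    have : (fun j => c j * (c j)⁻¹) = fun _ => (1:ℝ) := funext fun j => mul_inv_cancel₀ (hc j)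
    rw [this, hMone]
  have hVdet : V.det * V.det = 1 := by
    have := congrArg Matrix.det hVtV
    rwa [Matrix.det_mul, Matrix.det_transpose, Matrix.det_one] at this
  have hMdet : ∀ c : Fin n → ℝ, (M c).det = ∏ j, c j := by
    intro c
    show (Vᵀ * Matrix.diagonal c * V).det = _
    rw [Matrix.det_mul, Matrix.det_mul, Matrix.det_transpose, Matrix.det_diagonal]
    linear_combination (∏ j, c j) * hVdet
  -- quadratic form formula
  have hVmul : ∀ (x : Fin n → ℝ) (j : Fin n), (V *ᵥ x) j = v j ⬝ᵥ x := fun x j => rfl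
  have hquadB : ∀ (B : Matrix (Fin n) (Fin n) ℝ) (c : Fin n → ℝ) (x z : Fin n → ℝ),
      x ⬝ᵥ ((Bᵀ * M c * B) *ᵥ z) = ∑ j, c j * (v j ⬝ᵥ (B *ᵥ x)) * (v j ⬝ᵥ (B *ᵥ z)) := by
    intro B c x z
    have hfact : Bᵀ * M c * B = (V * B)ᵀ * (Matrix.diagonal c * (V * B)) := by
      show Bᵀ * (Vᵀ * Matrix.diagonal c * V) * B = _
      rw [Matrix.transpose_mul]
      simp only [Matrix.mul_assoc]
    rw [hfact, ← Matrix.mulVec_mulVec, aux_dotT, ← Matrix.mulVec_mulVec]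
    simp only [dotProduct, Matrix.mulVec_diagonal, ← Matrix.mulVec_mulVec, hVmul]
    exact Finset.sum_congr rfl fun j _ => by ring
  -- eigenvalue functions
  set c1 : Fin n → ℝ := fun j => σ + μ * lam j with hc1def
  set c2 : Fin n → ℝ := fun j => σ + μ * (if (j : ℕ) < k then lam j else 0) with hc2def
  have hc1pos : ∀ j, 0 < c1 j := fun j => by
    have := hlam_nonneg j; simp only [hc1def]; nlinarith
  have hc2pos : ∀ j, 0 < c2 j := fun j => by
    have := hlam_nonneg j; simp only [hc2def]; split <;> nlinarith
  have hc1ne : ∀ j, c1 j ≠ 0 := fun j => (hc1pos j).ne'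
  have hc2ne : ∀ j, c2 j ≠ 0 := fun j => (hc2pos j).ne'
  -- affine combinations
  have hgen : ∀ (a bb : ℝ) (c : Fin n → ℝ),
      a • (1 : Matrix (Fin n) (Fin n) ℝ) + bb • M c = M (fun j => a + bb * c j) := by
    intro a bb c
    have hdiag : Matrix.diagonal (fun j => a + bb * c j)
        = a • (1 : Matrix (Fin n) (Fin n) ℝ) + bb • Matrix.diagonal c := by
      rw [← Matrix.diagonal_one, ← Matrix.diagonal_smul, ← Matrix.diagonal_smul,
        Matrix.diagonal_add]
      congr 1
      funext j
      simp
    show _ = Vᵀ * Matrix.diagonal (fun j => a + bb * c j) * V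
    rw [hdiag]
    rw [Matrix.mul_add, Matrix.add_mul, Matrix.mul_smul, Matrix.mul_smul,
      Matrix.smul_mul, Matrix.smul_mul, Matrix.mul_one, hVtV]
  -- A^T A in terms of M lam
  have hHM : (L⁻¹)ᵀ * Aᵀ * A * L⁻¹ = M lam := hHdecomp.trans (hMdef lam)
  have hLtdet : IsUnit Lᵀ.det := by rwa [Matrix.det_transpose]
  have hLLi : L * L⁻¹ = 1 := Matrix.mul_nonsing_inv L hL
  have hLiL : L⁻¹ * L = 1 := Matrix.nonsing_inv_mul L hL
  have hLtLit : Lᵀ * (L⁻¹)ᵀ = 1 := by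
    rw [Matrix.transpose_nonsing_inv]; exact Matrix.mul_nonsing_inv Lᵀ hLtdet
  have hLitLt : (L⁻¹)ᵀ * Lᵀ = 1 := by
    rw [Matrix.transpose_nonsing_inv]; exact Matrix.nonsing_inv_mul Lᵀ hLtdet
  have hAA : Aᵀ * A = Lᵀ * M lam * L := by
    rw [← hHM]
    simp only [← Matrix.mul_assoc]
    rw [hLtLit, Matrix.one_mul, Matrix.mul_assoc (Aᵀ * A), hLiL, Matrix.mul_one]
  -- the sandwich identities
  have hsandwich : ∀ c : Fin n → ℝ, (∀ j, c j ≠ 0) →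
      (Lᵀ * M c * L) * (L⁻¹ * M (fun j => (c j)⁻¹) * (L⁻¹)ᵀ) = 1 := by
    intro c hc
    simp only [Matrix.mul_assoc]
    rw [← Matrix.mul_assoc L L⁻¹, hLLi, Matrix.one_mul,
      ← Matrix.mul_assoc (M c), hMmul]
    have : (fun j => c j * (c j)⁻¹) = fun _ => (1:ℝ) := funext fun j => mul_inv_cancel₀ (hc j)
    rw [this, hMone, Matrix.one_mul, hLtLit]
  -- Γcond explicit
  set c1i : Fin n → ℝ := fun j => (c1 j)⁻¹ with hc1idef
  set c2i : Fin n → ℝ := fun j => (c2 j)⁻¹ with hc2idef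
  have hPdef : μ • (Aᵀ * A) + σ • (Lᵀ * L) = Lᵀ * M c1 * L := by
    rw [hAA]
    have h1 : Lᵀ * (σ • (1 : Matrix (Fin n) (Fin n) ℝ) + μ • M lam) * L
        = μ • (Lᵀ * M lam * L) + σ • (Lᵀ * L) := by
      rw [Matrix.mul_add, Matrix.add_mul, Matrix.mul_smul, Matrix.mul_smul,
        Matrix.smul_mul, Matrix.smul_mul, Matrix.mul_one]
      rw [add_comm]
    rw [← h1, hgen σ μ lam]
  have hΓcondval : Γcond = L⁻¹ * M c1i * (L⁻¹)ᵀ := by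
    rw [hΓcond, hPdef]
    exact Matrix.inv_eq_right_inv (hsandwich c1 hc1ne)
  have hΓcondinv : Γcond⁻¹ = Lᵀ * M c1 * L := by
    rw [hΓcondval]
    exact Matrix.inv_eq_right_inv (mul_eq_one_comm.mp (hsandwich c1 hc1ne))
  -- Γhat explicit
  have hShat : σ • (1 : Matrix (Fin n) (Fin n) ℝ) +
      μ • ∑ j ∈ Finset.univ.filter (fun j : Fin n => (j : ℕ) < k),
        lam j • vecMulVec (v j) (v j) = M c2 := by
    have h1 : ∑ j ∈ Finset.univ.filter (fun j : Fin n => (j : ℕ) < k),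
        lam j • vecMulVec (v j) (v j)
        = ∑ j : Fin n, (if (j : ℕ) < k then lam j else 0) • vecMulVec (v j) (v j) := by
      rw [Finset.sum_filter]
      exact Finset.sum_congr rfl fun j _ => by split <;> simp
    rw [h1, hMdef, hgen σ μ]
  have hΓhatval : Γhat = L⁻¹ * M c2i * (L⁻¹)ᵀ := by
    rw [hΓhat, hShat, hMinv c2 hc2ne]
  have hΓhatinv : Γhat⁻¹ = Lᵀ * M c2 * L := by
    rw [hΓhatval]
    exact Matrix.inv_eq_right_inv (mul_eq_one_comm.mp (hsandwich c2 hc2ne))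
  have hΓcondinvmul : Γcond⁻¹ * Γcond = 1 := by
    rw [hΓcondinv, hΓcondval]; exact hsandwich c1 hc1ne
  have hΓhatinvmul : Γhat⁻¹ * Γhat = 1 := by
    rw [hΓhatinv, hΓhatval]; exact hsandwich c2 hc2ne
  -- quadratic forms
  have hquadG : ∀ (c : Fin n → ℝ) (x z : Fin n → ℝ),
      x ⬝ᵥ ((L⁻¹ * M c * (L⁻¹)ᵀ) *ᵥ z)
        = ∑ j, c j * (v j ⬝ᵥ ((L⁻¹)ᵀ *ᵥ x)) * (v j ⬝ᵥ ((L⁻¹)ᵀ *ᵥ z)) := by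
    intro c x z
    have : L⁻¹ * M c * (L⁻¹)ᵀ = ((L⁻¹)ᵀ)ᵀ * M c * (L⁻¹)ᵀ := by
      rw [Matrix.transpose_transpose]
    rw [this, hquadB]
  have hquadP : ∀ (c : Fin n → ℝ) (x z : Fin n → ℝ),
      x ⬝ᵥ ((Lᵀ * M c * L) *ᵥ z)
        = ∑ j, c j * (v j ⬝ᵥ (L *ᵥ x)) * (v j ⬝ᵥ (L *ᵥ z)) := fun c x z => hquadB L c x z
  -- the z vector
  set y : Fin n → ℝ := Aᵀ *ᵥ b with hydef
  set z : Fin n → ℝ := fun j => b ⬝ᵥ (A *ᵥ (L⁻¹ *ᵥ v j)) with hzdef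
  have hz : ∀ j, v j ⬝ᵥ ((L⁻¹)ᵀ *ᵥ y) = z j := by
    intro j
    rw [aux_dotT, hydef, aux_dotT, dotProduct_comm]
  have hyG : y ⬝ᵥ (Γcond *ᵥ y) = ∑ j, (c1 j)⁻¹ * z j ^ 2 := by
    rw [hΓcondval, hquadG]
    exact Finset.sum_congr rfl fun j _ => by rw [hz j]; ring
  have hyGhat : y ⬝ᵥ (Γhat *ᵥ y) = ∑ j, (c2 j)⁻¹ * z j ^ 2 := by
    rw [hΓhatval, hquadG]
    exact Finset.sum_congr rfl fun j _ => by rw [hz j]; ring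
  -- symmetry of the precision forms
  have hsymm : ∀ (c : Fin n → ℝ) (x1 x2 : Fin n → ℝ),
      x1 ⬝ᵥ ((Lᵀ * M c * L) *ᵥ x2) = x2 ⬝ᵥ ((Lᵀ * M c * L) *ᵥ x1) := by
    intro c x1 x2
    rw [hquadP, hquadP]
    exact Finset.sum_congr rfl fun j _ => by ring
  -- P xc = μ y
  have hPxc : Γcond⁻¹ *ᵥ xcond = μ • y := by
    rw [hxcond, Matrix.mulVec_smul, Matrix.mulVec_mulVec, hΓcondinvmul, Matrix.one_mulVec]
  have hPhxh : Γhat⁻¹ *ᵥ xhat = μ • y := by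
    rw [hxhat, Matrix.mulVec_smul, Matrix.mulVec_mulVec, hΓhatinvmul, Matrix.one_mulVec]
  -- expansion of the quadratics
  have hqexp : ∀ x : Fin n → ℝ,
      (x - xcond) ⬝ᵥ (Γcond⁻¹ *ᵥ (x - xcond))
        = x ⬝ᵥ (Γcond⁻¹ *ᵥ x) - 2 * μ * (x ⬝ᵥ y) + μ ^ 2 * (y ⬝ᵥ (Γcond *ᵥ y)) := by
    intro x
    have e1 : x ⬝ᵥ (Γcond⁻¹ *ᵥ xcond) = μ * (x ⬝ᵥ y) := by
      rw [hPxc, dotProduct_smul, smul_eq_mul]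
    have e2 : xcond ⬝ᵥ (Γcond⁻¹ *ᵥ x) = μ * (x ⬝ᵥ y) := by
      rw [hΓcondinv, hsymm, ← hΓcondinv, e1]
    have e3 : xcond ⬝ᵥ (Γcond⁻¹ *ᵥ xcond) = μ ^ 2 * (y ⬝ᵥ (Γcond *ᵥ y)) := by
      rw [hPxc, hxcond, smul_dotProduct, dotProduct_smul, smul_eq_mul, smul_eq_mul,
        dotProduct_comm]
      ring
    rw [Matrix.mulVec_sub, dotProduct_sub, sub_dotProduct, sub_dotProduct, e1, e2, e3]
    ring
  have hqexph : ∀ x : Fin n → ℝ,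
      (x - xhat) ⬝ᵥ (Γhat⁻¹ *ᵥ (x - xhat))
        = x ⬝ᵥ (Γhat⁻¹ *ᵥ x) - 2 * μ * (x ⬝ᵥ y) + μ ^ 2 * (y ⬝ᵥ (Γhat *ᵥ y)) := by
    intro x
    have e1 : x ⬝ᵥ (Γhat⁻¹ *ᵥ xhat) = μ * (x ⬝ᵥ y) := by
      rw [hPhxh, dotProduct_smul, smul_eq_mul]
    have e2 : xhat ⬝ᵥ (Γhat⁻¹ *ᵥ x) = μ * (x ⬝ᵥ y) := by
      rw [hΓhatinv, hsymm, ← hΓhatinv, e1]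
    have e3 : xhat ⬝ᵥ (Γhat⁻¹ *ᵥ xhat) = μ ^ 2 * (y ⬝ᵥ (Γhat *ᵥ y)) := by
      rw [hPhxh, hxhat, smul_dotProduct, dotProduct_smul, smul_eq_mul, smul_eq_mul,
        dotProduct_comm]
      ring
    rw [Matrix.mulVec_sub, dotProduct_sub, sub_dotProduct, sub_dotProduct, e1, e2, e3]
    ring
  -- exponent constant
  set Eexp : ℝ := (μ ^ 2 / (2 * σ)) *
      ∑ j ∈ Finset.univ.filter (fun j : Fin n => k ≤ (j : ℕ)),
        ((μ * lam j) / (μ * lam j + σ)) * z j ^ 2 with hEdef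
  have hEsum : - (μ ^ 2 / 2) * (y ⬝ᵥ (Γcond *ᵥ y) - y ⬝ᵥ (Γhat *ᵥ y)) = Eexp := by
    rw [hyG, hyGhat, ← Finset.sum_sub_distrib]
    have hsplit := Finset.sum_filter_add_sum_filter_not Finset.univ
      (fun j : Fin n => (j : ℕ) < k) (fun j => (c1 j)⁻¹ * z j ^ 2 - (c2 j)⁻¹ * z j ^ 2)
    rw [← hsplit]
    have h0 : ∑ j ∈ Finset.univ.filter (fun j : Fin n => (j : ℕ) < k),
        ((c1 j)⁻¹ * z j ^ 2 - (c2 j)⁻¹ * z j ^ 2) = 0 := by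
      apply Finset.sum_eq_zero
      intro j hj
      have : (j : ℕ) < k := (Finset.mem_filter.mp hj).2
      simp only [hc1def, hc2def, if_pos this]
      ring
    have hfeq : Finset.univ.filter (fun j : Fin n => ¬ (j : ℕ) < k)
        = Finset.univ.filter (fun j : Fin n => k ≤ (j : ℕ)) := by
      apply Finset.filter_congr
      intro j _
      simp [not_lt]
    rw [h0, zero_add, hfeq, hEdef, Finset.mul_sum, Finset.mul_sum]
    apply Finset.sum_congr rfl
    intro j hj
    have hkj : k ≤ (j : ℕ) := by simpa using (Finset.mem_filter.mp hj).2
    have hnot : ¬ (j : ℕ) < k := not_lt.mpr hkj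
    simp only [hc1def, hc2def, if_neg hnot, mul_zero, add_zero]
    have h1 : σ + μ * lam j > 0 := hc1pos j
    have h2 : μ * lam j + σ ≠ 0 := by linarith
    field_simp
    ring
  -- w exponent
  have hwx : ∀ x : Fin n → ℝ, x ⬝ᵥ ((Γcond⁻¹ - Γhat⁻¹) *ᵥ x)
      = x ⬝ᵥ (Γcond⁻¹ *ᵥ x) - x ⬝ᵥ (Γhat⁻¹ *ᵥ x) := by
    intro x
    rw [Matrix.sub_mulVec, dotProduct_sub]
  have hwnonneg : ∀ x : Fin n → ℝ, 0 ≤ x ⬝ᵥ ((Γcond⁻¹ - Γhat⁻¹) *ᵥ x) := by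
    intro x
    rw [hwx, hΓcondinv, hΓhatinv, hquadP, hquadP, ← Finset.sum_sub_distrib]
    apply Finset.sum_nonneg
    intro j _
    have hle : c2 j ≤ c1 j := by
      simp only [hc1def, hc2def]
      split
      · exact le_refl _
      · nlinarith [hlam_nonneg j]
    have h2 : 0 ≤ (c1 j - c2 j) * ((v j ⬝ᵥ (L *ᵥ x)) * (v j ⬝ᵥ (L *ᵥ x))) :=
      mul_nonneg (by linarith) (mul_self_nonneg _)
    linarith [h2]
  -- exponent identity
  have hexps : ∀ x : Fin n → ℝ,
      -(1/2) * ((x - xcond) ⬝ᵥ (Γcond⁻¹ *ᵥ (x - xcond)))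
        = Eexp + (-(1/2) * (x ⬝ᵥ ((Γcond⁻¹ - Γhat⁻¹) *ᵥ x)))
          + (-(1/2) * ((x - xhat) ⬝ᵥ (Γhat⁻¹ *ᵥ (x - xhat)))) := by
    intro x
    rw [hqexp, hqexph, hwx, ← hEsum]
    ring
  -- determinants
  have hLdet_ne : L.det ≠ 0 := by
    intro h; rw [h] at hL; exact (by simpa using hL : IsUnit (0:ℝ)).ne_zero rfl
  have hdetG : ∀ c : Fin n → ℝ, (L⁻¹ * M c * (L⁻¹)ᵀ).det
      = L.det⁻¹ * (∏ j, c j) * L.det⁻¹ := by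
    intro c
    rw [Matrix.det_mul, Matrix.det_mul, hMdet, Matrix.det_transpose,
      Matrix.det_nonsing_inv, Ring.inverse_eq_inv']
  have hdetC : Γcond.det = L.det⁻¹ * (∏ j, (c1 j)⁻¹) * L.det⁻¹ := by
    rw [hΓcondval]; exact hdetG c1i
  have hdetH : Γhat.det = L.det⁻¹ * (∏ j, (c2 j)⁻¹) * L.det⁻¹ := by
    rw [hΓhatval]; exact hdetG c2i
  have hdetHpos : 0 < Γhat.det := by
    rw [hdetH]
    have h1 : 0 < ∏ j, (c2 j)⁻¹ := Finset.prod_pos fun j _ => inv_pos.mpr (hc2pos j)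
    have h2 : 0 < L.det⁻¹ * L.det⁻¹ := by
      rcases lt_or_gt_of_ne (inv_ne_zero hLdet_ne) with h | h
      · nlinarith
      · nlinarith
    nlinarith
  have hdetCpos : 0 < Γcond.det := by
    rw [hdetC]
    have h1 : 0 < ∏ j, (c1 j)⁻¹ := Finset.prod_pos fun j _ => inv_pos.mpr (hc1pos j)
    have h2 : 0 < L.det⁻¹ * L.det⁻¹ := by
      rcases lt_or_gt_of_ne (inv_ne_zero hLdet_ne) with h | h
      · nlinarith
      · nlinarith
    nlinarith
  -- ratio of determinants
  set Pr : ℝ := ∏ j ∈ Finset.univ.filter (fun j : Fin n => k ≤ (j : ℕ)),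
      Real.sqrt (1 + μ * lam j / σ) with hPrdef
  set r : ℝ := ∏ j ∈ Finset.univ.filter (fun j : Fin n => k ≤ (j : ℕ)),
      (1 + μ * lam j / σ)⁻¹ with hrdef
  have haj_pos : ∀ j : Fin n, 0 < 1 + μ * lam j / σ := by
    intro j
    have := hlam_nonneg j
    have : 0 ≤ μ * lam j / σ := by positivity
    linarith
  have hrpos : 0 < r := Finset.prod_pos fun j _ => inv_pos.mpr (haj_pos j)
  have hdetCH : Γcond.det = Γhat.det * r := by
    rw [hdetC, hdetH]
    have hprod : (∏ j, (c1 j)⁻¹) = (∏ j, (c2 j)⁻¹) * r := by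
      have hs1 := Finset.prod_filter_mul_prod_filter_not Finset.univ
        (fun j : Fin n => (j : ℕ) < k) (fun j => (c1 j)⁻¹)
      have hs2 := Finset.prod_filter_mul_prod_filter_not Finset.univ
        (fun j : Fin n => (j : ℕ) < k) (fun j => (c2 j)⁻¹)
      have hfeq : Finset.univ.filter (fun j : Fin n => ¬ (j : ℕ) < k)
          = Finset.univ.filter (fun j : Fin n => k ≤ (j : ℕ)) := by
        apply Finset.filter_congr
        intro j _
        simp [not_lt]
      rw [← hs1, ← hs2]
      have heq1 : ∑ j ∈ Finset.univ.filter (fun j : Fin n => (j : ℕ) < k), (0:ℝ) = 0 := by simp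
      have hA : ∏ j ∈ Finset.univ.filter (fun j : Fin n => (j : ℕ) < k), (c1 j)⁻¹
          = ∏ j ∈ Finset.univ.filter (fun j : Fin n => (j : ℕ) < k), (c2 j)⁻¹ := by
        apply Finset.prod_congr rfl
        intro j hj
        have : (j : ℕ) < k := (Finset.mem_filter.mp hj).2
        simp only [hc1def, hc2def, if_pos this]
      have hB : ∏ j ∈ Finset.univ.filter (fun j : Fin n => ¬ (j : ℕ) < k), (c1 j)⁻¹
          = (∏ j ∈ Finset.univ.filter (fun j : Fin n => ¬ (j : ℕ) < k), (c2 j)⁻¹) * r := by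
        rw [hrdef, ← hfeq, ← Finset.prod_mul_distrib]
        apply Finset.prod_congr rfl
        intro j hj
        have hnot : ¬ (j : ℕ) < k := (Finset.mem_filter.mp hj).2
        simp only [hc1def, hc2def, if_neg hnot, mul_zero, add_zero]
        rw [← mul_inv]
        congr 1
        field_simp
      rw [hA, hB]
      try ring
    rw [hprod]
    try ring
  have hrsqrt : Real.sqrt r = Pr⁻¹ := by
    rw [hrdef, aux_sqrt_prod _ _ (fun j _ => (inv_pos.mpr (haj_pos j)).le), hPrdef,
      ← Finset.prod_inv_distrib]
    apply Finset.prod_congr rfl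
    intro j _
    rw [Real.sqrt_inv]
  have hPrpos : 0 < Pr := Finset.prod_pos fun j _ => Real.sqrt_pos.mpr (haj_pos j)
  have hdetrel : Γcond.det ^ (-(1:ℝ)/2) = Pr * Γhat.det ^ (-(1:ℝ)/2) := by
    have hneg : (-(1:ℝ)/2) = -(1/2) := by norm_num
    rw [hdetCH, hneg, Real.mul_rpow hdetHpos.le hrpos.le]
    rw [Real.rpow_neg hrpos.le, Real.rpow_neg hdetHpos.le]
    rw [← Real.sqrt_eq_rpow, ← Real.sqrt_eq_rpow, hrsqrt, inv_inv]
    ring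
  -- main identity
  have hkey : ∀ x : Fin n → ℝ, hfun x = N₁ * w x * gfun x := by
    intro x
    rw [hhfun, hgfun, hw, hN₁, hdetrel, hexps x, Real.exp_add, Real.exp_add]
    ring
  -- conclusions
  have hEnonneg : 0 ≤ Eexp := by
    rw [hEdef]
    apply mul_nonneg
    · positivity
    · apply Finset.sum_nonneg
      intro j _
      have h1 : 0 ≤ μ * lam j := mul_nonneg hμ.le (hlam_nonneg j)
      have h2 : 0 < μ * lam j + σ := by linarith
      have : 0 ≤ (μ * lam j) / (μ * lam j + σ) := div_nonneg h1 h2.le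
      positivity
  have hN1val : N₁ = Real.exp Eexp * Pr := hN₁
  have hN1ge : 1 ≤ N₁ := by
    rw [hN1val]
    have h1 : 1 ≤ Real.exp Eexp := Real.one_le_exp hEnonneg
    have h2 : 1 ≤ Pr := by
      rw [hPrdef]
      have hstep : ∀ j ∈ Finset.univ.filter (fun j : Fin n => k ≤ (j : ℕ)),
          (1:ℝ) ≤ Real.sqrt (1 + μ * lam j / σ) := by
        intro j _
        rw [Real.one_le_sqrt]
        have h4 := hlam_nonneg j
        have h5 : 0 ≤ μ * lam j / σ := by positivity
        linarith
      calc (1:ℝ) = ∏ _j ∈ Finset.univ.filter (fun j : Fin n => k ≤ (j : ℕ)), 1 := by simp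
        _ ≤ _ := Finset.prod_le_prod (fun j _ => zero_le_one) hstep
    nlinarith
  have hwle : ∀ x, w x ≤ 1 := by
    intro x
    rw [hw]
    rw [Real.exp_le_one_iff]
    have := hwnonneg x
    linarith
  have hwpos : ∀ x, 0 < w x := fun x => by rw [hw]; exact Real.exp_pos _
  have hgnonneg : ∀ x, 0 ≤ gfun x := by
    intro x
    rw [hgfun]
    have h1 : (0:ℝ) < 2 * Real.pi := by positivity
    have h2 : 0 < (2 * Real.pi) ^ (-(n : ℝ) / 2) := Real.rpow_pos_of_pos h1 _
    have h3 : 0 < Γhat.det ^ (-(1:ℝ)/2) := Real.rpow_pos_of_pos hdetHpos _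
    positivity
  have hw0 : w 0 = 1 := by
    rw [hw]
    simp
  refine ⟨hN1ge, ?_, hw0, ?_⟩
  · intro x
    rw [hkey x]
    have h1 := hwle x
    have h2 := hgnonneg x
    have h3 : (0:ℝ) ≤ N₁ := by linarith
    have h4 := hwpos x
    nlinarith [mul_nonneg h3 h2, h1]
  · rw [hkey 0, hw0]
    ring
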